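/- arXiv:2210.16016 — 2 statements merged into one kernel-verified Lean document; each statement's English description precedes it below -/
import Mathlib

section
/- Eckart–Young theorem (Frobenius norm): for any m×n real matrix A with singular values σ₁ ≥ σ₂ ≥ … ≥ σₙ ≥ 0 and any m×n real matrix B of rank at most k, one has ‖A - B‖_F² ≥ ∑_{j=k+1}^{n} σⱼ(A)². -/
open Matrix

/-- The squared Frobenius norm of a real matrix. -/
def frobSq {m n : ℕ} (A : Matrix (Fin m) (Fin n) ℝ) : ℝ :=
  ∑ i, ∑ j, (A i j) ^ 2

lemma frobSq_eq_trace {m n : ℕ} (M : Matrix (Fin m) (Fin n) ℝ) :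
    frobSq M = (Mᵀ * M).trace := by
  rw [frobSq, Matrix.trace, Finset.sum_comm]
  simp [Matrix.diag_apply, Matrix.mul_apply, sq]

lemma frobSq_nonneg {m n : ℕ} (M : Matrix (Fin m) (Fin n) ℝ) : 0 ≤ frobSq M :=
  Finset.sum_nonneg fun _ _ => Finset.sum_nonneg fun _ _ => sq_nonneg _

/-- For a symmetric idempotent `R`, `‖M R‖_F² = tr(MᵀM R)`. -/
lemma frobSq_mul_proj {m n : ℕ} (M : Matrix (Fin m) (Fin n) ℝ)
    (R : Matrix (Fin n) (Fin n) ℝ) (hRt : Rᵀ = R) (hRR : R * R = R) :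
    frobSq (M * R) = ((Mᵀ * M) * R).trace := by
  rw [frobSq_eq_trace, Matrix.transpose_mul, hRt]
  rw [show R * Mᵀ * (M * R) = R * (Mᵀ * M * R) by simp only [Matrix.mul_assoc]]
  rw [Matrix.trace_mul_comm]
  rw [show Mᵀ * M * R * R = Mᵀ * M * (R * R) by simp only [Matrix.mul_assoc], hRR]

lemma frobSq_orth_left {m n : ℕ} (M : Matrix (Fin m) (Fin n) ℝ)
    (U : Matrix (Fin m) (Fin m) ℝ) (hU : Uᵀ * U = 1) :
    frobSq (U * M) = frobSq M := by
  rw [frobSq_eq_trace, frobSq_eq_trace, Matrix.transpose_mul]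
  rw [show Mᵀ * Uᵀ * (U * M) = Mᵀ * (Uᵀ * U) * M by simp only [Matrix.mul_assoc], hU, Matrix.mul_one]

set_option maxHeartbeats 1000000 in
lemma exists_proj {m n k : ℕ} (B : Matrix (Fin m) (Fin n) ℝ) (hB : B.rank ≤ k) :
    ∃ P : Matrix (Fin n) (Fin n) ℝ, Pᵀ = P ∧ P * P = P ∧ P.trace ≤ (k : ℝ) ∧ B * P = B := by
  classical
  set W : Submodule ℝ (EuclideanSpace ℝ (Fin n)) :=
    Submodule.span ℝ (Set.range fun i => (WithLp.toLp 2 (B i) : EuclideanSpace ℝ (Fin n))) with hW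
  have hr : Module.finrank ℝ W ≤ k := by
    have h := B.rank_eq_finrank_span_row
    have hWmap : W = (Submodule.span ℝ (Set.range B.row)).map
        ((WithLp.linearEquiv 2 ℝ (Fin n → ℝ)).symm : (Fin n → ℝ) →ₗ[ℝ] EuclideanSpace ℝ (Fin n)) := by
      rw [hW, Submodule.map_span, ← Set.range_comp]; rfl
    rw [hWmap, LinearEquiv.finrank_map_eq]
    exact h ▸ hB
  set b := stdOrthonormalBasis ℝ W with hb
  -- orthonormality in coordinates
  have horth : ∀ l l', ∑ t, ((b l : EuclideanSpace ℝ (Fin n)) t) * ((b l' : EuclideanSpace ℝ (Fin n)) t)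
      = if l = l' then (1:ℝ) else 0 := by
    intro l l'
    have h := orthonormal_iff_ite.mp b.orthonormal l l'
    rw [Submodule.coe_inner] at h
    simpa [PiLp.inner_apply, RCLike.inner_apply, mul_comm] using h
  set P : Matrix (Fin n) (Fin n) ℝ :=
    Matrix.of (fun i j => ∑ l, ((b l : EuclideanSpace ℝ (Fin n)) i) * ((b l : EuclideanSpace ℝ (Fin n)) j)) with hP
  refine ⟨P, ?_, ?_, ?_, ?_⟩
  · ext i j
    simp [hP, mul_comm]
  · ext i j
    rw [Matrix.mul_apply]
    simp only [hP, Matrix.of_apply]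
    calc ∑ t, (∑ l, (b l : EuclideanSpace ℝ (Fin n)) i * (b l : EuclideanSpace ℝ (Fin n)) t) *
          (∑ l', (b l' : EuclideanSpace ℝ (Fin n)) t * (b l' : EuclideanSpace ℝ (Fin n)) j)
        = ∑ l, ∑ l', ((b l : EuclideanSpace ℝ (Fin n)) i * (b l' : EuclideanSpace ℝ (Fin n)) j) *
            ∑ t, (b l : EuclideanSpace ℝ (Fin n)) t * (b l' : EuclideanSpace ℝ (Fin n)) t := by
          simp_rw [Finset.sum_mul, Finset.mul_sum]
          rw [Finset.sum_comm]
          congr 1; ext l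
          rw [Finset.sum_comm]
          congr 1; ext l'
          congr 1; ext t
          ring
      _ = ∑ l, (b l : EuclideanSpace ℝ (Fin n)) i * (b l : EuclideanSpace ℝ (Fin n)) j := by
          simp [horth]
  · have : P.trace = (Module.finrank ℝ W : ℝ) := by
      rw [Matrix.trace]
      simp only [Matrix.diag_apply, hP, Matrix.of_apply]
      rw [Finset.sum_comm]
      simp [horth]
    rw [this]
    exact_mod_cast hr
  · ext i j
    rw [Matrix.mul_apply]
    simp only [hP, Matrix.of_apply]
    have hrow : (WithLp.toLp 2 (B i) : EuclideanSpace ℝ (Fin n)) ∈ W := by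
      rw [hW]; exact Submodule.subset_span ⟨i, rfl⟩
    -- sum_repr
    have h := b.sum_repr ⟨(WithLp.toLp 2 (B i) : EuclideanSpace ℝ (Fin n)), hrow⟩
    have h2 := congrArg (fun x : W => (x : EuclideanSpace ℝ (Fin n)) j) h
    simp only [AddSubmonoidClass.coe_finset_sum, Submodule.coe_smul] at h2
    have h3 : (∑ x, b.repr ⟨(WithLp.toLp 2 (B i) : EuclideanSpace ℝ (Fin n)), hrow⟩ x • ((b x : EuclideanSpace ℝ (Fin n)))) j
        = ∑ x, b.repr ⟨(WithLp.toLp 2 (B i) : EuclideanSpace ℝ (Fin n)), hrow⟩ x * (b x : EuclideanSpace ℝ (Fin n)) j := by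
      rw [WithLp.ofLp_sum, Finset.sum_apply]; rfl
    rw [h3] at h2
    rw [← h2]
    simp_rw [Finset.mul_sum]
    rw [Finset.sum_comm]
    refine Finset.sum_congr rfl fun l _ => ?_
    have : b.repr ⟨(WithLp.toLp 2 (B i) : EuclideanSpace ℝ (Fin n)), hrow⟩ l =
        ∑ t, (b l : EuclideanSpace ℝ (Fin n)) t * B i t := by
      rw [b.repr_apply_apply, Submodule.coe_inner]
      simp [PiLp.inner_apply, RCLike.inner_apply, mul_comm]
    rw [this, Finset.sum_mul]
    refine Finset.sum_congr rfl fun t _ => by ring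

/-- The combinatorial core. -/
lemma final_sum {n k : ℕ} (c t : Fin n → ℝ) (hc0 : ∀ j, 0 ≤ c j)
    (hcmono : ∀ i j : Fin n, i ≤ j → c j ≤ c i)
    (ht0 : ∀ j, 0 ≤ t j) (ht1 : ∀ j, t j ≤ 1)
    (hsum : (n : ℝ) - k ≤ ∑ j, t j) :
    ∑ j ∈ Finset.univ.filter (fun j : Fin n => k ≤ (j : ℕ)), c j ≤ ∑ j, c j * t j := by
  by_cases hk : n ≤ k
  · have : Finset.univ.filter (fun j : Fin n => k ≤ (j : ℕ)) = ∅ := by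
      apply Finset.filter_false_of_mem
      intro j _
      have := j.2
      omega
    rw [this, Finset.sum_empty]
    exact Finset.sum_nonneg fun j _ => mul_nonneg (hc0 j) (ht0 j)
  · push_neg at hk
    set j₀ : Fin n := ⟨k, hk⟩ with hj₀
    set S := Finset.univ.filter (fun j : Fin n => k ≤ (j : ℕ)) with hS
    have hScard : S.card = n - k := by
      have : S = Finset.Ici j₀ := by
        ext j
        simp [hS, Finset.mem_Ici, Fin.le_def, hj₀]
      rw [this, Fin.card_Ici]
    have key : c j₀ * ((∑ j, t j) - (S.card : ℝ)) ≤ ∑ j, c j * t j - ∑ j ∈ S, c j := by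
      have hsplit : ∑ j, c j * t j = ∑ j ∈ S, c j * t j + ∑ j ∈ Sᶜ, c j * t j :=
        (Finset.sum_add_sum_compl S _).symm
      have hts : (∑ j, t j) = ∑ j ∈ S, t j + ∑ j ∈ Sᶜ, t j :=
        (Finset.sum_add_sum_compl S _).symm
      have h1 : ∀ j ∈ S, c j₀ * (t j - 1) ≤ c j * t j - c j := by
        intro j hj
        have hkj : k ≤ (j : ℕ) := (Finset.mem_filter.mp hj).2
        have : c j ≤ c j₀ := hcmono j₀ j (by simp [Fin.le_def, hj₀, hkj])
        nlinarith [ht1 j, ht0 j]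
      have h2 : ∀ j ∈ Sᶜ, c j₀ * t j ≤ c j * t j := by
        intro j hj
        have hkj : (j : ℕ) < k := by
          have := Finset.mem_compl.mp hj
          simp [hS] at this
          omega
        have : c j₀ ≤ c j := hcmono j j₀ (by simp [Fin.le_def, hj₀]; omega)
        exact mul_le_mul_of_nonneg_right this (ht0 j)
      calc c j₀ * ((∑ j, t j) - (S.card : ℝ))
          = ∑ j ∈ S, c j₀ * (t j - 1) + ∑ j ∈ Sᶜ, c j₀ * t j := by
            rw [hts]
            simp only [mul_sub, Finset.sum_sub_distrib, Finset.sum_const, nsmul_eq_mul,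
              mul_one, Finset.mul_sum]
            rw [mul_add, Finset.mul_sum, Finset.mul_sum]
            ring
        _ ≤ ∑ j ∈ S, (c j * t j - c j) + ∑ j ∈ Sᶜ, c j * t j :=
            add_le_add (Finset.sum_le_sum h1) (Finset.sum_le_sum h2)
        _ = ∑ j, c j * t j - ∑ j ∈ S, c j := by
            rw [Finset.sum_sub_distrib, hsplit]; ring
    have hnk : (S.card : ℝ) = (n : ℝ) - k := by
      rw [hScard]; push_cast [Nat.cast_sub hk.le]; ring
    nlinarith [hc0 j₀, key, hsum, hnk]

/-- Eckart–Young (lower bound): any rank-`≤ k` matrix `B` satisfies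
`‖A - B‖_F² ≥ ∑_{j > k} σⱼ(A)²`, where the `σⱼ` come from an SVD of `A`. -/
theorem eckart_young_lower_bound {m n : ℕ} (hmn : n ≤ m)
    (A : Matrix (Fin m) (Fin n) ℝ)
    (U : Matrix (Fin m) (Fin m) ℝ) (V : Matrix (Fin n) (Fin n) ℝ)
    (hU : Uᵀ * U = 1) (hU' : U * Uᵀ = 1) (hV : Vᵀ * V = 1) (hV' : V * Vᵀ = 1)
    (σ : Fin n → ℝ) (hσpos : ∀ j, 0 ≤ σ j) (hσdec : Antitone σ)
    (hSVD : A = U * (Matrix.of fun (i : Fin m) (j : Fin n) =>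
      if (i : ℕ) = (j : ℕ) then σ j else 0) * Vᵀ)
    (k : ℕ) (B : Matrix (Fin m) (Fin n) ℝ) (hB : B.rank ≤ k) :
    ∑ j ∈ Finset.univ.filter (fun j : Fin n => k ≤ (j : ℕ)), (σ j) ^ 2 ≤
      frobSq (A - B) := by
  classical
  obtain ⟨P, hPt, hPP, htrP, hBP⟩ := exists_proj B hB
  set C : Matrix (Fin m) (Fin n) ℝ := Matrix.of (fun (i : Fin m) (j : Fin n) =>
      if (i : ℕ) = (j : ℕ) then σ j else 0) with hC
  -- 1 - P is a symmetric idempotent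
  have hRt : (1 - P)ᵀ = 1 - P := by
    rw [Matrix.transpose_sub, Matrix.transpose_one, hPt]
  have hRR : (1 - P) * (1 - P) = 1 - P := by
    rw [Matrix.sub_mul, Matrix.mul_sub, Matrix.mul_sub, hPP]
    simp
  set Q : Matrix (Fin n) (Fin n) ℝ := Vᵀ * (1 - P) * V with hQ
  have hQt : Qᵀ = Q := by
    rw [hQ, Matrix.transpose_mul, Matrix.transpose_mul, hRt, Matrix.transpose_transpose,
      Matrix.mul_assoc]
  have hQQ : Q * Q = Q := by
    rw [hQ]
    rw [show Vᵀ * (1 - P) * V * (Vᵀ * (1 - P) * V) =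
      Vᵀ * ((1 - P) * (V * Vᵀ) * (1 - P)) * V by simp only [Matrix.mul_assoc], hV', Matrix.mul_one, hRR]
  have htrQ : (n : ℝ) - k ≤ Q.trace := by
    have : Q.trace = (1 - P).trace := by
      rw [hQ, Matrix.trace_mul_comm, show V * (Vᵀ * (1 - P)) = V * Vᵀ * (1 - P) by
        simp only [Matrix.mul_assoc], hV', Matrix.one_mul]
    rw [this, Matrix.trace_sub, Matrix.trace_one]
    simp only [Fintype.card_fin]
    linarith [htrP]
  -- diagonal bounds for Q
  have hQd : ∀ j, 0 ≤ Q j j ∧ Q j j ≤ 1 := by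
    intro j
    have hdiag : Q j j = ∑ i, (Q i j) ^ 2 := by
      conv_lhs => rw [← hQQ]
      rw [Matrix.mul_apply]
      refine Finset.sum_congr rfl fun i _ => ?_
      have : Q j i = Q i j := by conv_lhs => rw [← hQt, Matrix.transpose_apply]
      rw [this, sq]
    have h0 : 0 ≤ Q j j := hdiag ▸ Finset.sum_nonneg fun i _ => sq_nonneg _
    have hle : (Q j j) ^ 2 ≤ Q j j := by
      conv_rhs => rw [hdiag]
      exact Finset.single_le_sum (fun i _ => sq_nonneg (Q i j)) (Finset.mem_univ j)
    exact ⟨h0, by nlinarith⟩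
  -- Cᵀ * C = diagonal σ²
  have hCC : Cᵀ * C = Matrix.diagonal (fun j => σ j ^ 2) := by
    ext j j'
    rw [Matrix.mul_apply]
    simp only [hC, Matrix.transpose_apply, Matrix.of_apply, Matrix.diagonal_apply]
    by_cases h : j = j'
    · subst h
      rw [Fintype.sum_eq_single (Fin.castLE hmn j)]
      · simp [Fin.coe_castLE, sq]
      · intro i hi
        have : (i : ℕ) ≠ (j : ℕ) := by
          intro hc
          apply hi
          ext
          simp [Fin.coe_castLE, hc]
        simp [this]
    · have hcoe : (j : ℕ) ≠ (j' : ℕ) := fun hc => h (Fin.ext hc)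
      simp only [if_neg h]
      apply Finset.sum_eq_zero
      intro i _
      by_cases h1 : (i : ℕ) = (j : ℕ)
      · simp [h1, hcoe, h1 ▸ hcoe]
      · simp [h1]
  -- main chain
  have step1 : frobSq ((A - B) * (1 - P)) ≤ frobSq (A - B) := by
    have e1 : frobSq ((A - B) * (1 - P)) = (((A - B)ᵀ * (A - B)) * (1 - P)).trace :=
      frobSq_mul_proj _ _ hRt hRR
    have e2 : frobSq ((A - B) * P) = (((A - B)ᵀ * (A - B)) * P).trace :=
      frobSq_mul_proj _ _ hPt hPP
    have e3 : frobSq (A - B) = ((A - B)ᵀ * (A - B)).trace := frobSq_eq_trace _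
    have : ((A - B)ᵀ * (A - B)).trace =
        (((A - B)ᵀ * (A - B)) * (1 - P)).trace + (((A - B)ᵀ * (A - B)) * P).trace := by
      rw [← Matrix.trace_add, ← Matrix.mul_add]
      simp
    rw [e1, e3, this]
    linarith [frobSq_nonneg ((A - B) * P), e2]
  have step2 : (A - B) * (1 - P) = U * (C * (Q * Vᵀ)) := by
    have hB0 : B * (1 - P) = 0 := by rw [Matrix.mul_sub, hBP]; simp
    have hQV : Q * Vᵀ = Vᵀ * (1 - P) := by
      rw [hQ, Matrix.mul_assoc, Matrix.mul_assoc, hV', Matrix.mul_one]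
    rw [Matrix.sub_mul, hB0, sub_zero, hSVD, hQV]
    simp only [Matrix.mul_assoc]
  have step3 : frobSq (U * (C * (Q * Vᵀ))) = ((Cᵀ * C) * Q).trace := by
    rw [frobSq_orth_left _ _ hU]
    have : C * (Q * Vᵀ) = (C * Q) * Vᵀ := by simp only [Matrix.mul_assoc]
    rw [this]
    -- frobSq (N * Vᵀ) = frobSq N
    have horr : frobSq ((C * Q) * Vᵀ) = frobSq (C * Q) := by
      rw [frobSq_eq_trace, frobSq_eq_trace, Matrix.transpose_mul, Matrix.transpose_transpose]
      rw [show V * (C * Q)ᵀ * (C * Q * Vᵀ) = V * ((C * Q)ᵀ * (C * Q) * Vᵀ) by simp only [Matrix.mul_assoc]]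
      rw [Matrix.trace_mul_comm]
      rw [show (C * Q)ᵀ * (C * Q) * Vᵀ * V = (C * Q)ᵀ * (C * Q) * (Vᵀ * V) by simp only [Matrix.mul_assoc],
        hV, Matrix.mul_one]
    rw [horr]
    have := frobSq_mul_proj C Q hQt hQQ
    rw [this]
  have step4 : ((Cᵀ * C) * Q).trace = ∑ j, σ j ^ 2 * Q j j := by
    rw [hCC, Matrix.trace]
    refine Finset.sum_congr rfl fun j _ => ?_
    simp [Matrix.diag_apply, Matrix.diagonal_mul]
  have step5 : ∑ j ∈ Finset.univ.filter (fun j : Fin n => k ≤ (j : ℕ)), (σ j) ^ 2 ≤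
      ∑ j, σ j ^ 2 * Q j j := by
    apply final_sum
    · intro j; exact sq_nonneg _
    · intro i j hij
      have := hσdec hij
      nlinarith [hσpos i, hσpos j]
    · intro j; exact (hQd j).1
    · intro j; exact (hQd j).2
    · rw [Matrix.trace] at htrQ
      simpa [Matrix.diag_apply] using htrQ
  calc ∑ j ∈ Finset.univ.filter (fun j : Fin n => k ≤ (j : ℕ)), (σ j) ^ 2
      ≤ ∑ j, σ j ^ 2 * Q j j := step5
    _ = ((Cᵀ * C) * Q).trace := step4.symm
    _ = frobSq (U * (C * (Q * Vᵀ))) := step3.symm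
    _ = frobSq ((A - B) * (1 - P)) := by rw [step2]
    _ ≤ frobSq (A - B) := step1
end

section
/- Eckart–Young–Mirsky for Hilbert–Schmidt operators (lower bound): if F : H₁ → H₂ is a Hilbert–Schmidt operator with singular values σ₁ ≥ σ₂ ≥ … and R : H₁ → H₂ is any bounded operator of rank at most k, then ‖F - R‖_HS² ≥ ∑_{j=k+1}^{∞} σⱼ². -/
open scoped ENNReal RealInnerProductSpace

section EYMAux

variable {H₁ H₂ : Type*}
  [NormedAddCommGroup H₁] [InnerProductSpace ℝ H₁] [CompleteSpace H₁]
  [NormedAddCommGroup H₂] [InnerProductSpace ℝ H₂] [CompleteSpace H₂]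

/-- Existence of a unit vector in the span of the first `n + k + 1` singular directions,
killed by `R` (which has rank at most `k`) and orthogonal to `n` prescribed vectors. -/
lemma eym_exists_next (q₁ : ℕ → H₁) (hq₁ : Orthonormal ℝ q₁) (k : ℕ) (R : H₁ →L[ℝ] H₂)
    (hR : Module.rank ℝ (LinearMap.range (R : H₁ →ₗ[ℝ] H₂)) ≤ (k : Cardinal))
    (n : ℕ) (w : Fin n → H₁) :
    ∃ v : H₁, ‖v‖ = 1 ∧ v ∈ Submodule.span ℝ (Set.range fun j : Fin (n + k + 1) => q₁ j) ∧
      R v = 0 ∧ ∀ i : Fin n, ⟪w i, v⟫ = 0 := by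
  classical
  set V : Submodule ℝ H₁ := Submodule.span ℝ (Set.range fun j : Fin (n + k + 1) => q₁ j) with hV
  haveI : FiniteDimensional ℝ V := FiniteDimensional.span_of_finite ℝ (Set.finite_range _)
  have hVrank : Module.finrank ℝ V = n + k + 1 := by
    have hli : LinearIndependent ℝ (fun j : Fin (n + k + 1) => q₁ (j : ℕ)) :=
      (hq₁.comp Fin.val Fin.val_injective).linearIndependent
    rw [hV, finrank_span_eq_card hli, Fintype.card_fin]
  haveI : FiniteDimensional ℝ (LinearMap.range (R : H₁ →ₗ[ℝ] H₂)) :=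
    IsNoetherian.iff_fg.mp
      (IsNoetherian.iff_rank_lt_aleph0.mpr (hR.trans_lt (Cardinal.nat_lt_aleph0 k)))
  have hRk : Module.finrank ℝ (LinearMap.range (R : H₁ →ₗ[ℝ] H₂)) ≤ k :=
    Module.finrank_le_of_rank_le hR
  set Rv : ↥V →ₗ[ℝ] H₂ := (R : H₁ →ₗ[ℝ] H₂).domRestrict V with hRv
  have hrangele : LinearMap.range Rv ≤ LinearMap.range (R : H₁ →ₗ[ℝ] H₂) := by
    rintro y ⟨u, rfl⟩; exact ⟨u, rfl⟩
  have hRvrank : Module.finrank ℝ (LinearMap.range Rv) ≤ k :=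
    (Submodule.finrank_mono hrangele).trans hRk
  have hKrank : n + 1 ≤ Module.finrank ℝ (LinearMap.ker Rv) := by
    have h := LinearMap.finrank_range_add_finrank_ker Rv
    omega
  set K : Submodule ℝ ↥V := LinearMap.ker Rv with hK
  set φ : ↥K →ₗ[ℝ] (Fin n → ℝ) :=
    LinearMap.pi (fun i => (innerSL ℝ (w i)).toLinearMap ∘ₗ (V.subtype ∘ₗ K.subtype)) with hφ
  have hker : LinearMap.ker φ ≠ ⊥ := by
    intro h
    have hinj : Function.Injective φ := LinearMap.ker_eq_bot.mp h
    have h2 := LinearMap.finrank_le_finrank_of_injective hinj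
    rw [Module.finrank_pi] at h2
    simp only [Fintype.card_fin] at h2
    omega
  obtain ⟨u, hu, hu0⟩ := (Submodule.ne_bot_iff _).mp hker
  have hφu : φ u = 0 := hu
  have hy0 : ((u : ↥V) : H₁) ≠ 0 := by
    simp only [ne_eq, ZeroMemClass.coe_eq_zero]
    exact hu0
  have hRy : R ((u : ↥V) : H₁) = 0 := by
    have h := u.2
    exact h
  set y : H₁ := ((u : ↥V) : H₁) with hy
  refine ⟨(‖y‖⁻¹ : ℝ) • y, norm_smul_inv_norm hy0, ?_, ?_, ?_⟩
  · exact Submodule.smul_mem _ _ (u : ↥V).2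
  · rw [map_smul, hRy, smul_zero]
  · intro i
    have h0 : ⟪w i, y⟫ = 0 := congrFun hφu i
    rw [inner_smul_right, h0, mul_zero]

/-- Lower bound on `‖F x‖` for a unit vector `x` in the span of the first `m + 1`
singular directions. -/
lemma eym_lower (F : H₁ →L[ℝ] H₂) (σ : ℕ → ℝ) (hσpos : ∀ j, 0 ≤ σ j) (hσdec : Antitone σ)
    (q₁ : ℕ → H₁) (q₂ : ℕ → H₂) (hq₁ : Orthonormal ℝ q₁) (hq₂ : Orthonormal ℝ q₂)
    (hSVD : ∀ f : H₁, HasSum (fun j => (σ j * ⟪q₁ j, f⟫) • q₂ j) (F f))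
    (m : ℕ) {x : H₁} (hx1 : ‖x‖ = 1)
    (hxmem : x ∈ Submodule.span ℝ (Set.range fun j : Fin (m + 1) => q₁ j)) :
    σ m ^ 2 ≤ ‖F x‖ ^ 2 := by
  classical
  obtain ⟨c, hc⟩ := (Submodule.mem_span_range_iff_exists_fun ℝ).mp hxmem
  have hq : Orthonormal ℝ (fun j : Fin (m + 1) => q₁ j) := hq₁.comp _ Fin.val_injective
  have hcoef : ∀ j : Fin (m + 1), ⟪q₁ (j : ℕ), x⟫ = c j := by
    intro j
    rw [← hc]
    exact hq.inner_right_fintype c j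
  have hsum1 : ∑ j : Fin (m + 1), c j ^ 2 = 1 := by
    have h1 : (1 : ℝ) = ⟪x, x⟫ := by
      rw [real_inner_self_eq_norm_sq, hx1, one_pow]
    rw [h1]
    nth_rewrite 2 [← hc]
    rw [inner_sum]
    apply Finset.sum_congr rfl
    intro j _
    rw [inner_smul_right, real_inner_comm, hcoef, sq]
  have hFc : ∀ i : ℕ, ⟪q₂ i, F x⟫ = σ i * ⟪q₁ i, x⟫ := by
    intro i
    have h1 := (hSVD x).mapL (innerSL ℝ (q₂ i))
    have h2 : (fun j => (innerSL ℝ (q₂ i)) ((σ j * ⟪q₁ j, x⟫) • q₂ j))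
        = fun j => if j = i then σ i * ⟪q₁ i, x⟫ else 0 := by
      funext j
      simp only [innerSL_apply_apply, inner_smul_right]
      rcases eq_or_ne j i with rfl | hji
      · rw [if_pos rfl, real_inner_self_eq_norm_sq, hq₂.1 j]
        ring
      · rw [if_neg hji, hq₂.2 (Ne.symm hji), mul_zero]
    rw [h2] at h1
    exact h1.unique (hasSum_ite_eq i _)
  calc σ m ^ 2 = ∑ j : Fin (m + 1), σ m ^ 2 * c j ^ 2 := by
        rw [← Finset.mul_sum, hsum1, mul_one]
    _ ≤ ∑ j : Fin (m + 1), σ (j : ℕ) ^ 2 * c j ^ 2 := by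
        apply Finset.sum_le_sum
        intro j _
        have h1 : σ m ≤ σ (j : ℕ) := hσdec (Nat.lt_succ_iff.mp j.2)
        have h0 : 0 ≤ σ m := hσpos m
        exact mul_le_mul_of_nonneg_right (pow_le_pow_left₀ h0 h1 2) (sq_nonneg _)
    _ = ∑ j : Fin (m + 1), ‖⟪q₂ (j : ℕ), F x⟫‖ ^ 2 := by
        apply Finset.sum_congr rfl
        intro j _
        rw [hFc, hcoef, Real.norm_eq_abs, sq_abs, mul_pow]
    _ = ∑ j ∈ Finset.range (m + 1), ‖⟪q₂ j, F x⟫‖ ^ 2 :=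
        Fin.sum_univ_eq_sum_range (fun j => ‖⟪q₂ j, F x⟫‖ ^ 2) (m + 1)
    _ ≤ ‖F x‖ ^ 2 := hq₂.sum_inner_products_le (F x)

/-- Existence of an orthonormal sequence `x` with `x n` in the span of the first
`n + k + 1` singular directions and `R (x n) = 0`. -/
lemma eym_exists_seq (q₁ : ℕ → H₁) (hq₁ : Orthonormal ℝ q₁) (k : ℕ) (R : H₁ →L[ℝ] H₂)
    (hR : Module.rank ℝ (LinearMap.range (R : H₁ →ₗ[ℝ] H₂)) ≤ (k : Cardinal)) :
    ∃ x : ℕ → H₁, Orthonormal ℝ x ∧ ∀ n : ℕ,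
      x n ∈ Submodule.span ℝ (Set.range fun j : Fin (n + k + 1) => q₁ j) ∧ R (x n) = 0 := by
  classical
  have H := eym_exists_next q₁ hq₁ k R hR
  let next : ∀ n, (Fin n → H₁) → H₁ := fun n w => (H n w).choose
  let tup : (n : ℕ) → Fin n → H₁ := fun n =>
    Nat.rec (motive := fun n => Fin n → H₁) (fun i => i.elim0)
      (fun n prev => Fin.snoc prev (next n prev)) n
  let x : ℕ → H₁ := fun n => next n (tup n)
  have tup_succ : ∀ n, tup (n + 1) = Fin.snoc (tup n) (next n (tup n)) := fun n => rfl
  have htup : ∀ n (i : Fin n), tup n i = x (i : ℕ) := by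
    intro n
    induction n with
    | zero => exact fun i => i.elim0
    | succ n ih =>
      intro i
      refine Fin.lastCases ?_ ?_ i
      · rw [tup_succ, Fin.snoc_last]
      · intro j
        rw [tup_succ, Fin.snoc_castSucc, ih j]
  have hspec : ∀ n, ‖x n‖ = 1 ∧
      x n ∈ Submodule.span ℝ (Set.range fun j : Fin (n + k + 1) => q₁ j) ∧
      R (x n) = 0 ∧ ∀ i : Fin n, ⟪tup n i, x n⟫ = 0 := fun n => (H n (tup n)).choose_spec
  have hinner : ∀ i j : ℕ, i < j → ⟪x i, x j⟫ = 0 := by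
    intro i j hij
    have h := (hspec j).2.2.2 ⟨i, hij⟩
    rwa [htup j ⟨i, hij⟩] at h
  refine ⟨x, ?_, fun n => ⟨(hspec n).2.1, (hspec n).2.2.1⟩⟩
  rw [orthonormal_iff_ite]
  intro i j
  rcases lt_trichotomy i j with h | rfl | h
  · rw [if_neg h.ne, hinner i j h]
  · rw [if_pos rfl, real_inner_self_eq_norm_sq, (hspec i).1, one_pow]
  · rw [if_neg h.ne', real_inner_comm, hinner j i h]

/-- The sum of `‖A (x n)‖²` over an orthonormal sequence `x` is at most the
Hilbert–Schmidt norm squared of `A` computed in any Hilbert basis. -/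
lemma eym_hs_bound (A : H₁ →L[ℝ] H₂) {x : ℕ → H₁} (hx : Orthonormal ℝ x)
    {ι : Type*} (e : HilbertBasis ι ℝ H₁) :
    ∑' n : ℕ, ENNReal.ofReal (‖A (x n)‖ ^ 2) ≤ ∑' i : ι, ENNReal.ofReal (‖A (e i)‖ ^ 2) := by
  obtain ⟨w, f, hf⟩ := exists_hilbertBasis ℝ H₂
  have pars₂ : ∀ y : H₂, ENNReal.ofReal (‖y‖ ^ 2)
      = ∑' m : w, ENNReal.ofReal (⟪(f m : H₂), y⟫ ^ 2) := by
    intro y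
    have h0 := f.hasSum_inner_mul_inner y y
    have h2 : (fun m : w => ⟪y, f m⟫ * ⟪f m, y⟫) = fun m : w => ⟪(f m : H₂), y⟫ ^ 2 := by
      funext m
      rw [real_inner_comm y, sq]
    rw [h2, real_inner_self_eq_norm_sq] at h0
    rw [← h0.tsum_eq, ENNReal.ofReal_tsum_of_nonneg (fun m => sq_nonneg _) h0.summable]
  have pars₁ : ∀ z : H₁, ENNReal.ofReal (‖z‖ ^ 2)
      = ∑' i : ι, ENNReal.ofReal (⟪e i, z⟫ ^ 2) := by
    intro z
    have h0 := e.hasSum_inner_mul_inner z z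
    have h2 : (fun i : ι => ⟪z, e i⟫ * ⟪e i, z⟫) = fun i : ι => ⟪e i, z⟫ ^ 2 := by
      funext i
      rw [real_inner_comm z, sq]
    rw [h2, real_inner_self_eq_norm_sq] at h0
    rw [← h0.tsum_eq, ENNReal.ofReal_tsum_of_nonneg (fun i => sq_nonneg _) h0.summable]
  have bessel : ∀ z : H₁, ∑' n : ℕ, ENNReal.ofReal (⟪x n, z⟫ ^ 2)
      ≤ ENNReal.ofReal (‖z‖ ^ 2) := by
    intro z
    have hsummable : Summable fun n => ‖⟪x n, z⟫‖ ^ 2 := hx.inner_products_summable z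
    have hle : ∑' n, ‖⟪x n, z⟫‖ ^ 2 ≤ ‖z‖ ^ 2 := hx.tsum_inner_products_le z
    calc ∑' n : ℕ, ENNReal.ofReal (⟪x n, z⟫ ^ 2)
        = ∑' n : ℕ, ENNReal.ofReal (‖⟪x n, z⟫‖ ^ 2) := by
          apply tsum_congr; intro n
          rw [Real.norm_eq_abs, sq_abs]
      _ = ENNReal.ofReal (∑' n, ‖⟪x n, z⟫‖ ^ 2) :=
          (ENNReal.ofReal_tsum_of_nonneg (fun n => sq_nonneg _) hsummable).symm
      _ ≤ _ := ENNReal.ofReal_le_ofReal hle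
  calc ∑' n : ℕ, ENNReal.ofReal (‖A (x n)‖ ^ 2)
      = ∑' n : ℕ, ∑' m : w, ENNReal.ofReal (⟪(f m : H₂), A (x n)⟫ ^ 2) :=
        tsum_congr fun n => pars₂ _
    _ = ∑' m : w, ∑' n : ℕ, ENNReal.ofReal (⟪(f m : H₂), A (x n)⟫ ^ 2) := ENNReal.tsum_comm
    _ = ∑' m : w, ∑' n : ℕ,
          ENNReal.ofReal (⟪x n, ContinuousLinearMap.adjoint A (f m)⟫ ^ 2) := by
        apply tsum_congr; intro m; apply tsum_congr; intro n
        rw [← ContinuousLinearMap.adjoint_inner_left, real_inner_comm]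
    _ ≤ ∑' m : w, ENNReal.ofReal (‖ContinuousLinearMap.adjoint A (f m)‖ ^ 2) :=
        ENNReal.tsum_le_tsum fun m => bessel _
    _ = ∑' m : w, ∑' i : ι,
          ENNReal.ofReal (⟪e i, ContinuousLinearMap.adjoint A (f m)⟫ ^ 2) :=
        tsum_congr fun m => pars₁ _
    _ = ∑' i : ι, ∑' m : w,
          ENNReal.ofReal (⟪e i, ContinuousLinearMap.adjoint A (f m)⟫ ^ 2) := ENNReal.tsum_comm
    _ = ∑' i : ι, ∑' m : w, ENNReal.ofReal (⟪(f m : H₂), A (e i)⟫ ^ 2) := by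
        apply tsum_congr; intro i; apply tsum_congr; intro m
        rw [real_inner_comm, ContinuousLinearMap.adjoint_inner_left]
    _ = ∑' i : ι, ENNReal.ofReal (‖A (e i)‖ ^ 2) := tsum_congr fun i => (pars₂ _).symm

end EYMAux

/-- Eckart–Young–Mirsky lower bound for Hilbert–Schmidt operators: if `F` has
singular value decomposition `F f = ∑ⱼ σⱼ ⟨q₁ⱼ, f⟩ q₂ⱼ` and `R` is a bounded
operator of rank at most `k`, then `‖F - R‖_HS² ≥ ∑_{j>k} σⱼ²`. -/
theorem eckart_young_mirsky_hilbert_schmidt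
    {H₁ H₂ : Type*}
    [NormedAddCommGroup H₁] [InnerProductSpace ℝ H₁] [CompleteSpace H₁]
    [NormedAddCommGroup H₂] [InnerProductSpace ℝ H₂] [CompleteSpace H₂]
    [TopologicalSpace.SeparableSpace H₁] [TopologicalSpace.SeparableSpace H₂]
    (F : H₁ →L[ℝ] H₂)
    (σ : ℕ → ℝ) (hσpos : ∀ j, 0 ≤ σ j) (hσdec : Antitone σ)
    (hσsum : Summable fun j => σ j ^ 2)
    (q₁ : ℕ → H₁) (q₂ : ℕ → H₂) (hq₁ : Orthonormal ℝ q₁) (hq₂ : Orthonormal ℝ q₂)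
    (hSVD : ∀ f : H₁, HasSum (fun j => (σ j * ⟪q₁ j, f⟫) • q₂ j) (F f))
    (k : ℕ) (R : H₁ →L[ℝ] H₂)
    (hR : Module.rank ℝ (LinearMap.range (R : H₁ →ₗ[ℝ] H₂)) ≤ (k : Cardinal))
    {ι : Type*} [Countable ι] (e : HilbertBasis ι ℝ H₁) :
    ∑' j : ℕ, ENNReal.ofReal (σ (j + k) ^ 2) ≤
      ∑' i : ι, (‖F (e i) - R (e i)‖₊ : ℝ≥0∞) ^ 2 := by
  obtain ⟨x, hx, hxprop⟩ := eym_exists_seq q₁ hq₁ k R hR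
  calc ∑' j : ℕ, ENNReal.ofReal (σ (j + k) ^ 2)
      ≤ ∑' j : ℕ, ENNReal.ofReal (‖(F - R) (x j)‖ ^ 2) := by
        apply ENNReal.tsum_le_tsum
        intro j
        apply ENNReal.ofReal_le_ofReal
        have h1 : (F - R) (x j) = F (x j) := by
          rw [ContinuousLinearMap.sub_apply, (hxprop j).2, sub_zero]
        rw [h1]
        exact eym_lower F σ hσpos hσdec q₁ q₂ hq₁ hq₂ hSVD (j + k) (hx.1 j) (hxprop j).1
    _ ≤ ∑' i : ι, ENNReal.ofReal (‖(F - R) (e i)‖ ^ 2) := eym_hs_bound (F - R) hx e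
    _ = ∑' i : ι, (‖F (e i) - R (e i)‖₊ : ℝ≥0∞) ^ 2 := by
        apply tsum_congr; intro i
        rw [ContinuousLinearMap.sub_apply, ENNReal.ofReal_pow (norm_nonneg _),
          ofReal_norm, enorm_eq_nnnorm]
end
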